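/- arXiv:2506.19881 — 3 statements merged into one kernel-verified Lean document; each statement's English description precedes it below -/
import Mathlib

section
/- Fix reals 0 < β < 1 and 0 < κ ≤ 0.99, integers n ≥ 1 and m ≥ n/β. Suppose there exist pairwise distinct works w_{i,j} ∈ W (i ∈ [m], j ∈ [n]) such that for all i ≠ i' ∈ [m] and all j ∈ [n]: ideas(w_{i,j}) = ideas(w_{i',j}) and SubSim(w_{i,j}) ∩ SubSim(w_{i',j}) = ∅. If a training algorithm Train is tainted with respect to ideas, then Train is not (κ,β)-clean: there exist a reflexive copyright dependency graph, a set C ⊆ W, a dataset D, a user u that is β-blameless with respect to D, C, Train (and this graph), and an auxiliary input aux such that τ(SubSim(C); aux) > 0.99 ≥ κ. -/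
open scoped ENNReal

/-- Scrubbing: remove from `D` every work stemming from `c`
(w.r.t. the copyright dependency graph `E`, where `E c w` means "`w` stems from `c`"). -/
noncomputable def scrub {W : Type*} (E : W → W → Prop) (D : List W) (c : W) : List W :=
  D.filter fun w => @decide (¬ E c w) (Classical.propDecidable _)

/-- `C_D`: the in-copyright works from which some element of `D` stems. -/
def CD {W : Type*} (E : W → W → Prop) (C : Set W) (D : List W) : Set W :=
  {c ∈ C | ∃ w ∈ D, E c w}

/-- `C_{-D} = C \ C_D`. -/
def CmD {W : Type*} (E : W → W → Prop) (C : Set W) (D : List W) : Set W :=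
  C \ CD E C D

/-- `SubSim(S) = ⋃_{w ∈ S} SubSim(w)`. -/
def SubSimSet {W : Type*} (SubSim : W → Set W) (S : Set W) : Set W :=
  ⋃ w ∈ S, SubSim w

/-- The user's output distribution `τ(·; aux)`: sample a model `p ← Train(D)`, then
sample `z ← u(p, aux)`. -/
noncomputable def tau {W X A : Type*} (Train : List W → PMF (X → PMF W))
    (u : (X → PMF W) → A → PMF W) (D : List W) (aux : A) : PMF W :=
  (Train D).bind fun p => u p aux

/-- `Train` is tainted w.r.t. `ideas` (and `SubSim`) if some fixed user copies for
every dataset `D` and every `w ∈ D`: `τ(SubSim(D); ideas w) > 0.99`. -/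
def Tainted {W X A : Type*} (Train : List W → PMF (X → PMF W))
    (ideas : W → A) (SubSim : W → Set W) : Prop :=
  ∃ u : (X → PMF W) → A → PMF W, ∀ D : List W, ∀ w ∈ D,
    (99 / 100 : ℝ≥0∞) <
      (tau Train u D (ideas w)).toOuterMeasure (SubSimSet SubSim {v | v ∈ D})

/-- A user `u` is `β`-blameless in the clean room w.r.t. `D`, `C`, `Train` (and the
graph `E`): for every `c ∈ C` and every `aux`, the clean-room output distribution
`τ_{-c}` (the model trained on `scrub(D, c)`) puts mass at most `β` on
`SubSim(C_{-D} ∪ {c})`. -/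
def Blameless {W X A : Type*} (β : ℝ≥0∞) (Train : List W → PMF (X → PMF W))
    (u : (X → PMF W) → A → PMF W) (E : W → W → Prop) (C : Set W) (D : List W)
    (SubSim : W → Set W) : Prop :=
  ∀ c ∈ C, ∀ aux : A,
    (tau Train u (scrub E D c) aux).toOuterMeasure
      (SubSimSet SubSim (CmD E C D ∪ {c})) ≤ β

/-- Neighboring datasets: they differ by inserting or deleting a single element. -/
def Neighboring {W : Type*} (D D' : List W) : Prop :=
  (∃ (l1 l2 : List W) (a : W), D = l1 ++ l2 ∧ D' = l1 ++ a :: l2) ∨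
  (∃ (l1 l2 : List W) (a : W), D' = l1 ++ l2 ∧ D = l1 ++ a :: l2)

/-- `(ε,δ)`-differential privacy of a training algorithm. -/
def DP {W M : Type*} (Train : List W → PMF M) (ε : ℝ) (δ : ℝ≥0∞) : Prop :=
  ∀ D D' : List W, Neighboring D D' → ∀ S : Set M,
    (Train D).toOuterMeasure S ≤
      ENNReal.ofReal (Real.exp ε) * (Train D').toOuterMeasure S + δ

/-- A dataset is golden w.r.t. the graph `E` and in-copyright works `C` if for every
`c ∈ C` at most one element of `D` (counted with multiplicity) stems from `c`. -/
def Golden {W : Type*} (E : W → W → Prop) (C : Set W) (D : List W) : Prop :=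
  ∀ c ∈ C, ∀ (i j : Fin D.length), E c (D.get i) → E c (D.get j) → i = j

/-- under the combinatorial richness assumption on works
(`m × n` pairwise-distinct works with columnwise-equal ideas and columnwise-disjoint
substantial-similarity sets, `m ≥ n/β`), any training algorithm `Train` that is
tainted w.r.t. `ideas` is not `(κ,β)`-clean: there are a reflexive dependency graph,
a set `C`, a dataset `D`, a `β`-blameless user `u`, and an `aux` such that
`τ(SubSim(C); aux) > 0.99 ≥ κ`. -/
theorem tainted_not_clean {W X A : Type*} [Countable W]
    (ideas : W → A) (SubSim : W → Set W) (hrefl : ∀ v, v ∈ SubSim v)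
    (β κ : ℝ≥0∞) (hβ0 : 0 < β) (hβ1 : β < 1) (hκ0 : 0 < κ) (hκ : κ ≤ 99 / 100)
    (n m : ℕ) (hn : 1 ≤ n) (hm : (n : ℝ≥0∞) / β ≤ (m : ℝ≥0∞))
    (w : Fin m → Fin n → W)
    (hwinj : Function.Injective fun q : Fin m × Fin n => w q.1 q.2)
    (hwideas : ∀ (i i' : Fin m) (j : Fin n), i ≠ i' → ideas (w i j) = ideas (w i' j))
    (hwdisj : ∀ (i i' : Fin m) (j : Fin n), i ≠ i' →
      SubSim (w i j) ∩ SubSim (w i' j) = ∅)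
    (Train : List W → PMF (X → PMF W))
    (htainted : Tainted Train ideas SubSim) :
    ∃ (E : W → W → Prop) (_ : ∀ v, E v v) (C : Set W) (D : List W)
      (u : (X → PMF W) → A → PMF W) (aux : A),
      Blameless β Train u E C D SubSim ∧
      (99 / 100 : ℝ≥0∞) < (tau Train u D aux).toOuterMeasure (SubSimSet SubSim C) ∧
      κ ≤ 99 / 100 := by
  classical
  obtain ⟨u, hu⟩ := htainted
  have hβne0 : β ≠ 0 := hβ0.ne'
  have hβnetop : β ≠ ∞ := (hβ1.trans ENNReal.one_lt_top).ne
  have hm0 : m ≠ 0 := by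
    rintro rfl
    rw [Nat.cast_zero, le_zero_iff, ENNReal.div_eq_zero_iff] at hm
    rcases hm with h | h
    · have : n = 0 := by exact_mod_cast h
      omega
    · exact hβnetop h
  have i₀ : Fin m := ⟨0, Nat.pos_of_ne_zero hm0⟩
  have j₀ : Fin n := ⟨0, hn⟩
  set a₀ : A := ideas (w i₀ j₀) with ha₀
  set u' : (X → PMF W) → A → PMF W := fun p _ => u p a₀ with hu'
  set p0 : PMF W := tau Train u ([] : List W) a₀ with hp0
  -- choose a good row i
  have hsum_le : ∑ i : Fin m, p0.toOuterMeasure (SubSim (w i j₀)) ≤ 1 := by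
    have h1 : ∀ x, ∑ i : Fin m, (SubSim (w i j₀)).indicator p0 x ≤ p0 x := by
      intro x
      by_cases hx : ∃ i, x ∈ SubSim (w i j₀)
      · obtain ⟨i₁, hi₁⟩ := hx
        rw [Finset.sum_eq_single i₁]
        · exact Set.indicator_le_self _ _ x
        · intro i _ hne
          apply Set.indicator_of_notMem
          intro hxi
          have hdisj := hwdisj i i₁ j₀ hne
          have : x ∈ SubSim (w i j₀) ∩ SubSim (w i₁ j₀) := ⟨hxi, hi₁⟩
          rw [hdisj] at this
          exact this
        · intro h; exact absurd (Finset.mem_univ i₁) h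
      · push_neg at hx
        have : ∀ i : Fin m, (SubSim (w i j₀)).indicator p0 x = 0 := fun i =>
          Set.indicator_of_notMem (hx i) _
        simp [this]
    calc ∑ i : Fin m, p0.toOuterMeasure (SubSim (w i j₀))
        = ∑ i : Fin m, ∑' x, (SubSim (w i j₀)).indicator p0 x := by
          simp [PMF.toOuterMeasure_apply]
      _ = ∑' x, ∑ i : Fin m, (SubSim (w i j₀)).indicator p0 x :=
          (Summable.tsum_finsetSum fun i _ => ENNReal.summable).symm
      _ ≤ ∑' x, p0 x := ENNReal.tsum_le_tsum h1
      _ = 1 := p0.tsum_coe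
  have hmb : (1 : ℝ≥0∞) ≤ ∑ _i : Fin m, β := by
    have hnm : (n : ℝ≥0∞) ≤ (m : ℝ≥0∞) * β :=
      (ENNReal.div_le_iff_le_mul (Or.inl hβne0) (Or.inl hβnetop)).mp hm
    have h1n : (1 : ℝ≥0∞) ≤ (n : ℝ≥0∞) := by exact_mod_cast hn
    calc (1 : ℝ≥0∞) ≤ (n : ℝ≥0∞) := h1n
      _ ≤ (m : ℝ≥0∞) * β := hnm
      _ = ∑ _i : Fin m, β := by
          simp [Finset.sum_const, nsmul_eq_mul]
  obtain ⟨i, -, hi⟩ := ENNReal.exists_le_of_sum_le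
    (Finset.univ_nonempty_iff.mpr ⟨i₀⟩) (hsum_le.trans hmb)
  -- scrub fact
  have hscrub : scrub (Eq : W → W → Prop) [w i j₀] (w i j₀) = [] := by
    simp [scrub, List.filter_singleton]
  refine ⟨Eq, fun v => rfl, {w i j₀}, [w i j₀], u', a₀, ?_, ?_, hκ⟩
  · -- Blameless
    intro c hc aux
    have hc' : c = w i j₀ := hc
    rw [hc']
    have hset : CmD (Eq : W → W → Prop) {w i j₀} [w i j₀] ∪ {w i j₀} =
        ({w i j₀} : Set W) :=
      Set.union_eq_self_of_subset_left (Set.diff_subset)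
    rw [hscrub, hset]
    have hss : SubSimSet SubSim ({w i j₀} : Set W) = SubSim (w i j₀) := by
      simp [SubSimSet]
    rw [hss]
    have htau : tau Train u' ([] : List W) aux = p0 := rfl
    rw [htau]
    exact hi
  · -- infringement
    have ht := hu [w i j₀] (w i j₀) (by simp)
    have hid : ideas (w i j₀) = a₀ := by
      by_cases h : i = i₀
      · rw [h]
      · exact hwideas i i₀ j₀ h
    have hset2 : {v | v ∈ [w i j₀]} = ({w i j₀} : Set W) := by
      ext v; simp
    rw [hid, hset2] at ht
    have htau : tau Train u' [w i j₀] a₀ = tau Train u [w i j₀] a₀ := rfl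
    rw [htau]
    exact ht
end

section
/- Fix a real 0 < β < 1, integers n ≥ 1 and m ≥ n/β, and pairwise distinct works w_{i,j} ∈ W (i ∈ [m], j ∈ [n]) such that SubSim(w_{i,j}) ∩ SubSim(w_{i',j}) = ∅ for all i ≠ i' ∈ [m] and all j ∈ [n]. Take the copyright dependency graph to be the identity relation on W (so scrub(D,c) removes exactly the occurrences of c from D). For x ∈ [m]^n let D^(x) be the dataset (w_{x_1,1}, …, w_{x_n,n}). Let u be a user that ignores its auxiliary input (u(p, aux) = u(p, ⊥) for all aux). Then for every training algorithm Train there exists x ∈ [m]^n such that u is β-blameless with respect to the dataset D^(x), the set C = D^(x), and Train. -/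
open scoped ENNReal

/-- counting lemma: with `m ≥ n/β` and works `w i j` pairwise
distinct with columnwise-disjoint substantial-similarity sets, the copyright
dependency graph taken to be the identity relation, and a user `u` that ignores its
auxiliary input, for every training algorithm `Train` there is `x ∈ [m]^n` such that
`u` is `β`-blameless w.r.t. the dataset `D^(x) = (w_{x_1,1}, …, w_{x_n,n})`, the set
`C = D^(x)`, and `Train`. -/
theorem exists_blameless_dataset {W X A : Type*} [Countable W]
    (SubSim : W → Set W) (hrefl : ∀ v, v ∈ SubSim v)
    (β : ℝ≥0∞) (hβ0 : 0 < β) (hβ1 : β < 1)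
    (n m : ℕ) (hn : 1 ≤ n) (hm : (n : ℝ≥0∞) / β ≤ (m : ℝ≥0∞))
    (w : Fin m → Fin n → W)
    (hwinj : Function.Injective fun q : Fin m × Fin n => w q.1 q.2)
    (hwdisj : ∀ (i i' : Fin m) (j : Fin n), i ≠ i' →
      SubSim (w i j) ∩ SubSim (w i' j) = ∅)
    (u : (X → PMF W) → A → PMF W)
    (hu : ∀ (p : X → PMF W) (a a' : A), u p a = u p a')
    (Train : List W → PMF (X → PMF W)) :
    ∃ x : Fin n → Fin m,
      Blameless β Train u (fun a b => a = b)
        {v | v ∈ List.ofFn fun j => w (x j) j}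
        (List.ofFn fun j => w (x j) j) SubSim := by
  classical
  have hβt : β ≠ ⊤ := (hβ1.trans_le le_top).ne
  have hn0 : n ≠ 0 := by omega
  have hm0 : 0 < m := by
    rcases Nat.eq_zero_or_pos m with h | h
    · exfalso
      subst h
      simp only [Nat.cast_zero, nonpos_iff_eq_zero, ENNReal.div_eq_zero_iff] at hm
      rcases hm with h | h
      · exact hn0 (by exact_mod_cast h)
      · exact hβt h
    · exact h
  have i₀ : Fin m := ⟨0, hm0⟩
  cases isEmpty_or_nonempty A with
  | inl hA => exact ⟨fun _ => i₀, fun c hc aux => (hA.false aux).elim⟩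
  | inr hA =>
  obtain ⟨aux₀⟩ := hA
  set ν : List W → Set W → ℝ≥0∞ :=
    fun l S => (tau Train u l aux₀).toOuterMeasure S with hν
  set L : (Fin n → Fin m) → Fin n → List W :=
    fun x j => ((List.finRange n).filter (fun k => decide (k ≠ j))).map
      (fun k => w (x k) k) with hL
  have hwj : ∀ (i i' : Fin m) (j j' : Fin n), w i j = w i' j' → j = j' := by
    intro i i' j j' h
    have h2 := hwinj (a₁ := (i, j)) (a₂ := (i', j')) h
    exact (Prod.ext_iff.mp h2).2
  have scrub_eq : ∀ (x : Fin n → Fin m) (j : Fin n),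
      scrub (fun a b => a = b) (List.ofFn fun k => w (x k) k) (w (x j) j) = L x j := by
    intro x j
    unfold scrub
    rw [List.ofFn_eq_map, List.filter_map]
    congr 1
    apply List.filter_congr
    intro k _
    rw [Function.comp_apply, decide_eq_decide]
    constructor
    · intro h hkj
      exact h (by rw [hkj])
    · intro h he
      exact h (hwj _ _ _ _ he).symm
  -- sum over a column of disjoint SubSim sets is at most 1
  have hsum1 : ∀ (l : List W) (j : Fin n) (T : Finset (Fin m)),
      ∑ i ∈ T, ν l (SubSim (w i j)) ≤ 1 := by
    intro l j T
    have ptw : ∀ a, ∑ i ∈ T, (SubSim (w i j)).indicator (tau Train u l aux₀) a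
        ≤ (tau Train u l aux₀) a := by
      intro a
      by_cases h : ∃ i ∈ T, a ∈ SubSim (w i j)
      · obtain ⟨i1, hi1, ha⟩ := h
        rw [Finset.sum_eq_single i1]
        · exact Set.indicator_le_self _ _ a
        · intro b hb hne
          apply Set.indicator_of_notMem
          intro hb'
          have hd := hwdisj b i1 j hne
          have : a ∈ SubSim (w b j) ∩ SubSim (w i1 j) := ⟨hb', ha⟩
          rw [hd] at this
          exact this
        · intro h'; exact absurd hi1 h'
      · push_neg at h
        rw [Finset.sum_eq_zero fun i hi => Set.indicator_of_notMem (h i hi) _]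
        exact zero_le
    calc ∑ i ∈ T, ν l (SubSim (w i j))
        = ∑ i ∈ T, ∑' a, (SubSim (w i j)).indicator (tau Train u l aux₀) a := by
          simp only [hν, PMF.toOuterMeasure_apply]
      _ = ∑' a, ∑ i ∈ T, (SubSim (w i j)).indicator (tau Train u l aux₀) a :=
          (Summable.tsum_finsetSum fun _ _ => ENNReal.summable).symm
      _ ≤ ∑' a, (tau Train u l aux₀) a := ENNReal.tsum_le_tsum ptw
      _ = 1 := (tau Train u l aux₀).tsum_coe
  -- the number of bad rows in each column is < m/n
  have hcol : ∀ (l : List W) (j : Fin n),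
      (Finset.univ.filter fun i : Fin m => β < ν l (SubSim (w i j))).card * n < m := by
    intro l j
    set T := Finset.univ.filter fun i : Fin m => β < ν l (SubSim (w i j)) with hT
    rcases T.eq_empty_or_nonempty with h | ⟨i1, hi1⟩
    · rw [h]; simpa using hm0
    have hβlt : ∀ i ∈ T, β < ν l (SubSim (w i j)) :=
      fun i hi => (Finset.mem_filter.mp hi).2
    have herase : (∑ _i ∈ T.erase i1, β) ≠ ⊤ := by
      rw [Finset.sum_const, nsmul_eq_mul]
      exact ENNReal.mul_ne_top (ENNReal.natCast_ne_top _) hβt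
    have h1 : (T.card : ℝ≥0∞) * β < 1 := by
      calc (T.card : ℝ≥0∞) * β = ∑ _i ∈ T, β := by rw [Finset.sum_const, nsmul_eq_mul]
        _ = β + ∑ _i ∈ T.erase i1, β := (Finset.add_sum_erase T _ hi1).symm
        _ < ν l (SubSim (w i1 j)) + ∑ _i ∈ T.erase i1, β :=
            ENNReal.add_lt_add_right herase (hβlt i1 hi1)
        _ ≤ ν l (SubSim (w i1 j)) + ∑ i ∈ T.erase i1, ν l (SubSim (w i j)) := by
            gcongr with i hi
            exact (hβlt i (Finset.mem_of_mem_erase hi)).le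
        _ = ∑ i ∈ T, ν l (SubSim (w i j)) :=
            Finset.add_sum_erase T (fun i => ν l (SubSim (w i j))) hi1
        _ ≤ 1 := hsum1 l j T
    have hn' : (n : ℝ≥0∞) ≤ (m : ℝ≥0∞) * β := by
      rw [ENNReal.div_le_iff hβ0.ne' hβt] at hm; exact hm
    have h2 : ((T.card : ℝ≥0∞) * n) * β < (m : ℝ≥0∞) * β := by
      calc ((T.card : ℝ≥0∞) * n) * β = ((T.card : ℝ≥0∞) * β) * n := by ring
        _ < 1 * n := by
            rw [ENNReal.mul_lt_mul_iff_left (by exact_mod_cast hn0) (ENNReal.natCast_ne_top _)]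
            exact h1
        _ = (n : ℝ≥0∞) := one_mul _
        _ ≤ (m : ℝ≥0∞) * β := hn'
    have h3 := (ENNReal.mul_lt_mul_iff_left hβ0.ne' hβt).mp h2
    exact_mod_cast h3
  -- main claim: a good x exists
  suffices hgood : ∃ x : Fin n → Fin m, ∀ j, ν (L x j) (SubSim (w (x j) j)) ≤ β by
    obtain ⟨x, hx⟩ := hgood
    refine ⟨x, ?_⟩
    intro c hc aux
    have hc' : c ∈ Set.range fun j => w (x j) j := List.mem_ofFn.mp hc
    clear hc
    obtain ⟨j, rfl⟩ := hc'
    have hCmD : CmD (fun a b => a = b)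
        {v | v ∈ List.ofFn fun k => w (x k) k} (List.ofFn fun k => w (x k) k) = ∅ := by
      apply Set.eq_empty_iff_forall_notMem.mpr
      intro v hv
      simp only [CmD, CD, Set.mem_diff, Set.mem_setOf_eq] at hv
      exact hv.2 ⟨hv.1, v, hv.1, rfl⟩
    rw [hCmD, Set.empty_union, scrub_eq x j]
    have hS : SubSimSet SubSim {w (x j) j} = SubSim (w (x j) j) := by
      simp [SubSimSet]
    rw [hS]
    have htau : tau Train u (L x j) aux = tau Train u (L x j) aux₀ := by
      simp only [tau]
      congr 1
      funext p
      exact hu p aux aux₀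
    rw [htau]
    exact hx j
  by_contra hbad
  push_neg at hbad
  set σ : Fin n → (Fin n → Fin m) → (Fin n → Fin m) :=
    fun j x => Function.update x j i₀ with hσ
  set Bad : Fin n → Finset (Fin n → Fin m) :=
    fun j => Finset.univ.filter (fun x => β < ν (L x j) (SubSim (w (x j) j))) with hBad
  set N := Fintype.card (Fin n → Fin m) with hNdef
  set K := (m - 1) / n with hKdef
  -- each fiber of bad points has at most K elements
  have hfiber : ∀ (j : Fin n) (t : Fin n → Fin m),
      ((Bad j).filter fun x => σ j x = t).card ≤ K := by
    intro j t
    have hsub : ((Bad j).filter fun x => σ j x = t).card ≤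
        (Finset.univ.filter fun i : Fin m => β < ν (L t j) (SubSim (w i j))).card := by
      apply Finset.card_le_card_of_injOn (fun x => x j)
      · intro x hx
        obtain ⟨hxB, hxt⟩ := Finset.mem_filter.mp hx
        have hxB' := (Finset.mem_filter.mp hxB).2
        have hLt : L t j = L x j := by
          apply List.map_congr_left
          intro k hk
          have hkj : k ≠ j := by simpa using (List.mem_filter.mp hk).2
          rw [← hxt]
          simp [hσ, Function.update_of_ne hkj]
        refine Finset.mem_filter.mpr ⟨Finset.mem_univ _, ?_⟩
        rw [hLt]; exact hxB'
      · intro x hx y hy hxy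
        simp only [Finset.coe_filter, Set.mem_setOf_eq] at hx hy
        funext k
        by_cases hkj : k = j
        · subst hkj; exact hxy
        · have : σ j x k = σ j y k := by rw [hx.2, hy.2]
          simpa [hσ, Function.update_of_ne hkj] using this
    have hTK := hcol (L t j) j
    have hsub' := Nat.mul_le_mul_right n hsub
    have : ((Bad j).filter fun x => σ j x = t).card * n ≤ m - 1 := by omega
    rw [hKdef, Nat.le_div_iff_mul_le (by omega : 0 < n)]
    exact this
  -- each full fiber of σ j over its image has exactly m elements
  have himg : ∀ j : Fin n, (Finset.univ.image (σ j)).card * m = N := by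
    intro j
    have hcard : (Finset.univ : Finset (Fin n → Fin m)).card
        = ∑ t ∈ Finset.univ.image (σ j), ((Finset.univ.filter fun x => σ j x = t).card) :=
      Finset.card_eq_sum_card_fiberwise
        (fun x _ => Finset.mem_image_of_mem _ (Finset.mem_univ x))
    have hfib : ∀ t ∈ Finset.univ.image (σ j),
        (Finset.univ.filter fun x => σ j x = t).card = m := by
      intro t ht
      obtain ⟨s, _, rfl⟩ := Finset.mem_image.mp ht
      have hm' : (Finset.univ : Finset (Fin m)).card = m := by simp
      refine Eq.trans ?_ hm'
      apply Finset.card_bij' (fun x _ => x j)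
        (fun i _ => Function.update (σ j s) j i)
      · intro x _; exact Finset.mem_univ _
      · intro i _
        refine Finset.mem_filter.mpr ⟨Finset.mem_univ _, ?_⟩
        simp [hσ, Function.update_idem]
      · intro x hx
        have hxt := (Finset.mem_filter.mp hx).2
        funext k
        by_cases hkj : k = j
        · subst hkj; simp
        · rw [Function.update_of_ne hkj]
          have : σ j x k = σ j s k := by rw [hxt]
          simpa [hσ, Function.update_of_ne hkj] using this.symm
      · intro i _
        simp
    rw [Finset.card_univ] at hcard
    rw [hNdef, hcard, Finset.sum_congr rfl hfib, Finset.sum_const, smul_eq_mul, mul_comm]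
  -- every x is bad somewhere
  have hNle : N ≤ ∑ j : Fin n, (Bad j).card := by
    have hcover : (Finset.univ : Finset (Fin n → Fin m)) ⊆ Finset.univ.biUnion Bad := by
      intro x _
      obtain ⟨j, hj⟩ := hbad x
      exact Finset.mem_biUnion.mpr
        ⟨j, Finset.mem_univ j, Finset.mem_filter.mpr ⟨Finset.mem_univ x, hj⟩⟩
    calc N = (Finset.univ : Finset (Fin n → Fin m)).card := Finset.card_univ.symm
      _ ≤ (Finset.univ.biUnion Bad).card := Finset.card_le_card hcover
      _ ≤ ∑ j : Fin n, (Bad j).card := Finset.card_biUnion_le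
  have hBadle : ∀ j, (Bad j).card ≤ (Finset.univ.image (σ j)).card * K := by
    intro j
    rw [Finset.card_eq_sum_card_fiberwise
      (f := σ j) (t := Finset.univ.image (σ j))
      (fun x _ => Finset.mem_image_of_mem _ (Finset.mem_univ x))]
    calc ∑ t ∈ Finset.univ.image (σ j), ((Bad j).filter fun x => σ j x = t).card
        ≤ ∑ _t ∈ Finset.univ.image (σ j), K := Finset.sum_le_sum fun t _ => hfiber j t
      _ = (Finset.univ.image (σ j)).card * K := by rw [Finset.sum_const, smul_eq_mul]
  have hNpos : 0 < N := by
    rw [hNdef]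
    exact @Fintype.card_pos _ _ ⟨fun _ => i₀⟩
  have key : N * m ≤ N * (m - 1) := by
    calc N * m ≤ (∑ j : Fin n, (Bad j).card) * m := Nat.mul_le_mul_right _ hNle
      _ ≤ (∑ j : Fin n, (Finset.univ.image (σ j)).card * K) * m :=
          Nat.mul_le_mul_right _ (Finset.sum_le_sum fun j _ => hBadle j)
      _ = ∑ j : Fin n, (Finset.univ.image (σ j)).card * K * m := by rw [Finset.sum_mul]
      _ = ∑ _j : Fin n, N * K := by
          apply Finset.sum_congr rfl
          intro j _
          rw [mul_right_comm, himg j]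
      _ = n * (N * K) := by rw [Finset.sum_const, smul_eq_mul, Finset.card_univ, Fintype.card_fin]
      _ = N * (n * K) := by ring
      _ ≤ N * (m - 1) := by
          apply Nat.mul_le_mul_left
          rw [hKdef, mul_comm]
          exact Nat.div_mul_le_self (m - 1) n
  have hmm : m ≤ m - 1 := Nat.le_of_mul_le_mul_left key hNpos
  omega
end

section
/- Let Train be an (ε,δ)-differentially private training algorithm with ε > 0 and δ ≥ 0. Fix a reflexive copyright dependency graph, a set C ⊆ W of in-copyright works, and a golden dataset D such that C_D is finite with N_D = |C_D| elements. Then for every β ≥ 0, every κ ≥ (e^ε · N_D + 1)·β + N_D·δ, every user u that is β-blameless with respect to D, C, Train, and every auxiliary input aux: τ(SubSim(C); aux) ≤ κ. That is, Train is (κ,β)-clean for golden datasets. -/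
open scoped ENNReal

open MeasureTheory
open scoped ENNReal
open MeasureTheory

lemma pmf_lintegral_eq_tsum {M : Type*} [MeasurableSpace M] [MeasurableSingletonClass M]
    (p : PMF M) (f : M → ℝ≥0∞) :
    ∫⁻ a, f a ∂p.toMeasure = ∑' a, p a * f a := calc
  ∫⁻ a, f a ∂p.toMeasure = ∫⁻ a in p.support, f a ∂p.toMeasure := by
      rw [PMF.restrict_toMeasure_support p]
  _ = ∑' a : p.support, f a.1 * p.toMeasure {a.1} := lintegral_countable f p.support_countable
  _ = ∑' a : p.support, p a.1 * f a.1 := by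
      refine tsum_congr fun a => ?_
      rw [PMF.toMeasure_apply_singleton p _ (measurableSet_singleton _), mul_comm]
  _ = ∑' a, p a * f a := by
      refine tsum_subtype_eq_of_support_subset (f := fun a => p a * f a) (s := p.support) ?_
      intro a ha
      simp only [Function.mem_support, ne_eq] at ha
      rw [PMF.mem_support_iff]
      intro hp
      exact ha (by rw [hp, zero_mul])

lemma post_process {M : Type*} (P Q : PMF M) (g : M → ℝ≥0∞) (hg : ∀ p, g p ≤ 1)
    (k d : ℝ≥0∞)
    (h : ∀ S : Set M, P.toOuterMeasure S ≤ k * Q.toOuterMeasure S + d) :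
    ∑' p, P p * g p ≤ k * (∑' p, Q p * g p) + d := by
  letI : MeasurableSpace M := ⊤
  haveI : MeasurableSingletonClass M := ⟨fun _ => trivial⟩
  have hofReal : ∀ a, ENNReal.ofReal ((g a).toReal) = g a := fun a =>
    ENNReal.ofReal_toReal ((lt_of_le_of_lt (hg a) ENNReal.one_lt_top).ne)
  have key : ∀ R : PMF M, ∑' p, R p * g p
      = ∫⁻ t in Set.Ioi (0:ℝ), R.toOuterMeasure {a | t ≤ (g a).toReal} := by
    intro R
    rw [← pmf_lintegral_eq_tsum R g]
    have h1 := lintegral_eq_lintegral_meas_le R.toMeasure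
      (f := fun a => (g a).toReal)
      (Filter.Eventually.of_forall fun a => ENNReal.toReal_nonneg)
      measurable_from_top.aemeasurable
    simp_rw [hofReal] at h1
    rw [h1]
    exact lintegral_congr fun t =>
      PMF.toMeasure_apply_eq_toOuterMeasure_apply _ (hs := MeasurableSpace.measurableSet_top)
  have hanti : ∀ R : PMF M, Measurable fun t : ℝ => R.toOuterMeasure {a | t ≤ (g a).toReal} := by
    intro R
    refine Antitone.measurable fun s t hst => ?_
    exact measure_mono fun a ha => le_trans hst ha
  have hsplit : ∀ R : PMF M,
      ∫⁻ t in Set.Ioi (0:ℝ), R.toOuterMeasure {a | t ≤ (g a).toReal}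
        = ∫⁻ t in Set.Ioc (0:ℝ) 1, R.toOuterMeasure {a | t ≤ (g a).toReal} := by
    intro R
    rw [← Set.Ioc_union_Ioi_eq_Ioi (zero_le_one (α := ℝ)),
      lintegral_union measurableSet_Ioi (Set.Ioc_disjoint_Ioi (le_refl (1:ℝ)))]
    have hzero : ∫⁻ t in Set.Ioi (1:ℝ), R.toOuterMeasure {a | t ≤ (g a).toReal} = 0 := by
      have hint : ∀ t ∈ Set.Ioi (1:ℝ), R.toOuterMeasure {a | t ≤ (g a).toReal} = (fun _ : ℝ => (0:ℝ≥0∞)) t := by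
        intro t ht
        have hempty : {a | t ≤ (g a).toReal} = (∅ : Set M) := by
          ext a
          simp only [Set.mem_setOf_eq, Set.mem_empty_iff_false, iff_false, not_le]
          exact lt_of_le_of_lt
            (ENNReal.toReal_le_of_le_ofReal zero_le_one (by simpa using hg a)) ht
        rw [hempty]
        exact measure_empty
      rw [setLIntegral_congr_fun measurableSet_Ioi hint]
      exact lintegral_zero
    rw [hzero, add_zero]
  rw [key P, key Q, hsplit P, hsplit Q]
  calc ∫⁻ t in Set.Ioc (0:ℝ) 1, P.toOuterMeasure {a | t ≤ (g a).toReal}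
      ≤ ∫⁻ t in Set.Ioc (0:ℝ) 1, (k * Q.toOuterMeasure {a | t ≤ (g a).toReal} + d) :=
        lintegral_mono fun t => h _
    _ = k * (∫⁻ t in Set.Ioc (0:ℝ) 1, Q.toOuterMeasure {a | t ≤ (g a).toReal})
          + d * volume (Set.Ioc (0:ℝ) 1) := by
        rw [lintegral_add_right _ measurable_const, lintegral_const,
          lintegral_const_mul _ (hanti Q), Measure.restrict_apply MeasurableSet.univ,
          Set.univ_inter]
    _ = k * (∫⁻ t in Set.Ioc (0:ℝ) 1, Q.toOuterMeasure {a | t ≤ (g a).toReal}) + d := by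
        rw [Real.volume_Ioc]
        norm_num

lemma scrub_eq_of_not_mem {W : Type*} (E : W → W → Prop) {C : Set W} {D : List W} {c : W}
    (hcC : c ∈ C) (hc : c ∉ CD E C D) : scrub E D c = D := by
  refine List.filter_eq_self.mpr fun w hw => ?_
  simp only [decide_eq_true_eq]
  intro hE
  exact hc ⟨hcC, w, hw, hE⟩

lemma scrub_neighboring {W : Type*} (E : W → W → Prop) {C : Set W} {D : List W}
    (hgolden : Golden E C D) {c : W} (hc : c ∈ CD E C D) :
    ∃ l1 l2 w, D = l1 ++ w :: l2 ∧ scrub E D c = l1 ++ l2 := by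
  obtain ⟨hcC, w, hw, hE⟩ := hc
  obtain ⟨l1, l2, rfl⟩ := List.append_of_mem hw
  refine ⟨l1, l2, w, rfl, ?_⟩
  have hlen : l1.length < (l1 ++ w :: l2).length := by simp
  have hget : (l1 ++ w :: l2).get ⟨l1.length, hlen⟩ = w := by
    simp [List.get_eq_getElem, List.getElem_append_right]
  have hnot1 : ∀ x ∈ l1, ¬ E c x := by
    intro x hx hEx
    obtain ⟨i, rfl⟩ := List.mem_iff_get.mp hx
    have hi : (i : ℕ) < (l1 ++ w :: l2).length := by
      have := i.2; simp; omega
    have hgi : (l1 ++ w :: l2).get ⟨i, hi⟩ = l1.get i := by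
      simp [List.get_eq_getElem, List.getElem_append_left i.2]
    have := hgolden c hcC ⟨i, hi⟩ ⟨l1.length, hlen⟩ (by rw [hgi]; exact hEx) (by rw [hget]; exact hE)
    have : (i : ℕ) = l1.length := by simpa [Fin.ext_iff] using this
    exact absurd this (Nat.ne_of_lt i.2)
  have hnot2 : ∀ x ∈ l2, ¬ E c x := by
    intro x hx hEx
    obtain ⟨i, rfl⟩ := List.mem_iff_get.mp hx
    have hi : l1.length + 1 + (i : ℕ) < (l1 ++ w :: l2).length := by
      have := i.2; simp; omega
    have hgi : (l1 ++ w :: l2).get ⟨l1.length + 1 + i, hi⟩ = l2.get i := by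
      simp only [List.get_eq_getElem]
      rw [List.getElem_append_right (by omega)]
      have h1 : l1.length + 1 + (i : ℕ) - l1.length = (i : ℕ) + 1 := by omega
      simp_rw [h1]
      simp
    have := hgolden c hcC ⟨l1.length + 1 + i, hi⟩ ⟨l1.length, hlen⟩
      (by rw [hgi]; exact hEx) (by rw [hget]; exact hE)
    have : l1.length + 1 + (i : ℕ) = l1.length := by simpa [Fin.ext_iff] using this
    omega
  show (l1 ++ w :: l2).filter _ = l1 ++ l2
  rw [List.filter_append, List.filter_cons_of_neg (by simp [hE]),
    List.filter_eq_self.mpr fun x hx => by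
      simp only [decide_eq_true_eq]; exact hnot1 x hx,
    List.filter_eq_self.mpr fun x hx => by
      simp only [decide_eq_true_eq]; exact hnot2 x hx]


/-- DP implies clean-room copy protection on golden data: let
`Train` be `(ε,δ)`-DP with `ε > 0`, fix a reflexive dependency graph, in-copyright
works `C`, and a golden dataset `D` with `N_D = |C_D|` finite.  Then for every
`β ≥ 0`, every `κ ≥ (e^ε·N_D + 1)·β + N_D·δ`, every `β`-blameless user `u`, and every
`aux`: `τ(SubSim(C); aux) ≤ κ`. -/
theorem dp_implies_clean {W X A : Type*} [Countable W]
    (Eg : W → W → Prop) (hErefl : ∀ v, Eg v v)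
    (SubSim : W → Set W) (hSrefl : ∀ v, v ∈ SubSim v)
    (C : Set W) (D : List W)
    (Train : List W → PMF (X → PMF W))
    (ε : ℝ) (hε : 0 < ε) (δ : ℝ≥0∞)
    (hDP : DP Train ε δ)
    (hgolden : Golden Eg C D)
    (hfin : (CD Eg C D).Finite)
    (β κ : ℝ≥0∞)
    (hκ : (ENNReal.ofReal (Real.exp ε) * (hfin.toFinset.card : ℝ≥0∞) + 1) * β
            + (hfin.toFinset.card : ℝ≥0∞) * δ ≤ κ)
    (u : (X → PMF W) → A → PMF W)
    (hblameless : Blameless β Train u Eg C D SubSim)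
    (aux : A) :
    (tau Train u D aux).toOuterMeasure (SubSimSet SubSim C) ≤ κ := by
  classical
  set k : ℝ≥0∞ := ENNReal.ofReal (Real.exp ε) with hk
  have hcover : SubSimSet SubSim C ⊆
      SubSimSet SubSim (CmD Eg C D) ∪ ⋃ c ∈ hfin.toFinset, SubSim c := by
    intro x hx
    rw [SubSimSet, Set.mem_iUnion₂] at hx
    obtain ⟨w, hwC, hxw⟩ := hx
    by_cases hw : w ∈ CD Eg C D
    · exact Or.inr (Set.mem_biUnion (hfin.mem_toFinset.mpr hw) hxw)
    · refine Or.inl ?_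
      rw [SubSimSet, Set.mem_iUnion₂]
      exact ⟨w, ⟨hwC, hw⟩, hxw⟩
  have h1 : (tau Train u D aux).toOuterMeasure (SubSimSet SubSim (CmD Eg C D)) ≤ β := by
    rcases Set.eq_empty_or_nonempty (CmD Eg C D) with he | ⟨c₀, hc₀⟩
    · have hes : SubSimSet SubSim (CmD Eg C D) = ∅ := by simp [SubSimSet, he]
      rw [hes]
      simp
    · have hb := hblameless c₀ hc₀.1 aux
      rw [scrub_eq_of_not_mem Eg hc₀.1 hc₀.2] at hb
      refine le_trans (measure_mono ?_) hb
      exact Set.biUnion_subset_biUnion_left Set.subset_union_left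
  have h2 : ∀ c ∈ hfin.toFinset,
      (tau Train u D aux).toOuterMeasure (SubSim c) ≤ k * β + δ := by
    intro c hcF
    have hc : c ∈ CD Eg C D := hfin.mem_toFinset.mp hcF
    obtain ⟨l1, l2, w, hD, hscrub⟩ := scrub_neighboring Eg hgolden hc
    have hnb : Neighboring D (scrub Eg D c) := Or.inr ⟨l1, l2, w, hscrub, hD⟩
    have hDPc := hDP D (scrub Eg D c) hnb
    have hgle : ∀ p, (u p aux).toOuterMeasure (SubSim c) ≤ 1 := fun p =>
      le_trans (measure_mono (Set.subset_univ _))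
        (le_of_eq ((PMF.toOuterMeasure_apply_eq_one_iff _ _).mpr (Set.subset_univ _)))
    have hbind : ∀ D' : List W, (tau Train u D' aux).toOuterMeasure (SubSim c)
        = ∑' p, Train D' p * (u p aux).toOuterMeasure (SubSim c) := fun D' =>
      PMF.toOuterMeasure_bind_apply _ _ _
    calc (tau Train u D aux).toOuterMeasure (SubSim c)
        = ∑' p, Train D p * (u p aux).toOuterMeasure (SubSim c) := hbind D
      _ ≤ k * (∑' p, Train (scrub Eg D c) p * (u p aux).toOuterMeasure (SubSim c)) + δ :=
          post_process (Train D) (Train (scrub Eg D c))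
            (fun p => (u p aux).toOuterMeasure (SubSim c)) hgle k δ hDPc
      _ = k * (tau Train u (scrub Eg D c) aux).toOuterMeasure (SubSim c) + δ := by
          rw [hbind (scrub Eg D c)]
      _ ≤ k * β + δ := by
          gcongr
          refine le_trans (measure_mono ?_) (hblameless c hc.1 aux)
          intro x hx
          rw [SubSimSet, Set.mem_iUnion₂]
          exact ⟨c, Or.inr rfl, hx⟩
  calc (tau Train u D aux).toOuterMeasure (SubSimSet SubSim C)
      ≤ (tau Train u D aux).toOuterMeasure
          (SubSimSet SubSim (CmD Eg C D) ∪ ⋃ c ∈ hfin.toFinset, SubSim c) :=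
        measure_mono hcover
    _ ≤ (tau Train u D aux).toOuterMeasure (SubSimSet SubSim (CmD Eg C D))
          + (tau Train u D aux).toOuterMeasure (⋃ c ∈ hfin.toFinset, SubSim c) :=
        measure_union_le _ _
    _ ≤ β + ∑ c ∈ hfin.toFinset, (k * β + δ) :=
        add_le_add h1 (le_trans (measure_biUnion_finset_le _ _) (Finset.sum_le_sum h2))
    _ = β + (hfin.toFinset.card : ℝ≥0∞) * (k * β + δ) := by
        rw [Finset.sum_const, nsmul_eq_mul]
    _ = (k * (hfin.toFinset.card : ℝ≥0∞) + 1) * β + (hfin.toFinset.card : ℝ≥0∞) * δ := by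
        ring
    _ ≤ κ := hκ
end
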